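/- In B_3, for k ≥ 0 and u ≥ 1, the braid δ^{3k+2} a^u is conjugate to Δ^{2k+1} a^{1+u}, where δ = ba, Δ = aba. -/

import Mathlib

def B3rels : Set (FreeGroup (Fin 2)) :=
  {FreeGroup.of 0 * FreeGroup.of 1 * FreeGroup.of 0 *
    (FreeGroup.of 1 * FreeGroup.of 0 * FreeGroup.of 1)⁻¹}

/-- The braid group on 3 strands, presented as ⟨a, b | aba = bab⟩. -/
abbrev B3 := PresentedGroup B3rels

def a : B3 := PresentedGroup.of 0
def b : B3 := PresentedGroup.of 1
def x : B3 := a⁻¹ * b * a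
def δ : B3 := b * a
def Δ : B3 := a * b * a

/-- τ_i = a, b, x according to i ≡ 1, 2, 0 (mod 3). -/
def τ (i : ℤ) : B3 := if i % 3 = 1 then a else if i % 3 = 2 then b else x

lemma braid : a * b * a = b * a * b := by
  have hm : (FreeGroup.of 0 * FreeGroup.of 1 * FreeGroup.of 0 *
      (FreeGroup.of 1 * FreeGroup.of 0 * FreeGroup.of 1)⁻¹ : FreeGroup (Fin 2)) ∈
      Subgroup.normalClosure B3rels := Subgroup.subset_normalClosure rfl
  have h1 : (QuotientGroup.mk (FreeGroup.of 0 * FreeGroup.of 1 * FreeGroup.of 0 *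
      (FreeGroup.of 1 * FreeGroup.of 0 * FreeGroup.of 1)⁻¹ : FreeGroup (Fin 2)) : B3) = 1 :=
    (QuotientGroup.eq_one_iff _).mpr hm
  have h2 : a * b * a * (b * a * b)⁻¹ = 1 := by
    have h1' : PresentedGroup.mk B3rels (FreeGroup.of 0 * FreeGroup.of 1 * FreeGroup.of 0 *
        (FreeGroup.of 1 * FreeGroup.of 0 * FreeGroup.of 1)⁻¹ : FreeGroup (Fin 2)) = 1 := h1
    simpa [a, b, PresentedGroup.of, map_mul, map_inv] using h1'
  exact mul_inv_eq_one.mp h2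

lemma delta_sq (u : ℕ) : δ ^ 2 * a ^ u = Δ * a ^ (1 + u) := by
  have e1 : δ ^ 2 * a ^ u = b * a * b * (a * a ^ u) := by
    simp [δ, pow_two, mul_assoc]
  rw [e1, ← braid, Δ, pow_add, pow_one]

lemma delta_cube : δ ^ 3 = Δ ^ 2 := by
  have e2 : Δ ^ 2 = b * a * b * (a * b * a) := by rw [Δ, pow_two, braid]
  rw [e2]
  simp [δ, pow_succ, mul_assoc]

theorem delta_pow_a_conj_Delta (k u : ℕ) (hu : 1 ≤ u) :
    ∃ g : B3, g * (δ ^ (3 * k + 2) * a ^ u) * g⁻¹ = Δ ^ (2 * k + 1) * a ^ (1 + u) := by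
  refine ⟨1, ?_⟩
  simp only [one_mul, inv_one, mul_one]
  calc δ ^ (3 * k + 2) * a ^ u = (δ ^ 3) ^ k * (δ ^ 2 * a ^ u) := by
        rw [pow_add, pow_mul, mul_assoc]
    _ = (Δ ^ 2) ^ k * (Δ * a ^ (1 + u)) := by rw [delta_cube, delta_sq]
    _ = Δ ^ (2 * k + 1) * a ^ (1 + u) := by
        rw [pow_add Δ (2 * k) 1, pow_mul, pow_one, mul_assoc]
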